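/- Under the Bernoulli product model with $\sum_j p_j \leq W$, the variance of $\hat{M}_n - M_n$ satisfies $\mathrm{Var}(\hat{M}_n - M_n) \leq \frac{2n+1}{n(n+1)} W$, where $\hat{M}_n = K_{n,1}/n$. -/

import Mathlib

open MeasureTheory ProbabilityTheory Real Filter
open scoped ENNReal NNReal Topology

lemma geom_bound {p : ℝ} (h0 : 0 ≤ p) (h1 : p ≤ 1) (n : ℕ) :
    (n + 1 : ℝ) * (p * (1 - p) ^ n) ≤ 1 := by
  have key : (∑ i ∈ Finset.range (n+1), (1-p)^i) * ((1-p) - 1) = (1-p)^(n+1) - 1 :=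
    geom_sum_mul _ _
  have h3 : (n+1 : ℝ) * (1-p)^n ≤ ∑ i ∈ Finset.range (n+1), (1-p)^i := by
    have := Finset.card_nsmul_le_sum (Finset.range (n+1)) (fun i => (1-p)^i) ((1-p)^n)
      (fun i hi => pow_le_pow_of_le_one (by linarith) (by linarith)
        (Nat.le_of_lt_succ (Finset.mem_range.mp hi)))
    simpa [nsmul_eq_mul] using this
  have h4 : (0:ℝ) ≤ (1-p)^(n+1) := pow_nonneg (by linarith) _
  nlinarith [mul_le_mul_of_nonneg_left h3 h0]

theorem stmt
    {Ω : Type*} [MeasurableSpace Ω] (μ : Measure Ω) [IsProbabilityMeasure μ]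
    (p : ℕ → ℝ) (hp : ∀ j, p j ∈ Set.Ioo (0 : ℝ) 1) (hsum : Summable p)
    (n : ℕ) (X : ℕ → Ω → ℕ)
    (hmeas : ∀ j, Measurable (X j))
    (hindep : iIndepFun X μ)
    (hbin : ∀ j k, μ {ω | X j ω = k} =
      ENNReal.ofReal ((n.choose k : ℝ) * p j ^ k * (1 - p j) ^ (n - k)))
    (W : ℝ) (hW : ∑' j, p j ≤ W) (hn : 1 ≤ n) :
    variance (fun ω => (∑' j, if X j ω = 1 then (1 : ℝ) else 0) / n
        - ∑' j, if X j ω = 0 then p j else 0) μ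
      ≤ (2 * n + 1) / (n * (n + 1)) * W := by
  classical
  have hn0 : (0:ℝ) < n := by exact_mod_cast Nat.lt_of_lt_of_le Nat.zero_lt_one hn
  set C : ℝ := (2 * n + 1) / (n * (n + 1)) with hCdef
  set Z : Ω → ℝ := fun ω => (∑' j, if X j ω = 1 then (1 : ℝ) else 0) / n
        - ∑' j, if X j ω = 0 then p j else 0 with hZdef
  have hC0 : 0 ≤ C := by positivity
  have hW0 : 0 ≤ W := le_trans (tsum_nonneg fun j => (hp j).1.le) hW
  set A : ℕ → Set Ω := fun j => {ω | X j ω = 1} with hAdef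
  set B : ℕ → Set Ω := fun j => {ω | X j ω = 0} with hBdef
  have hAmeas : ∀ j, MeasurableSet (A j) := fun j => hmeas j (measurableSet_singleton 1)
  have hBmeas : ∀ j, MeasurableSet (B j) := fun j => hmeas j (measurableSet_singleton 0)
  set φ : ℕ → ℕ → ℝ :=
    fun j k => (if k = 1 then (1:ℝ) else 0)/n - (if k = 0 then p j else 0) with hφdef
  set Y : ℕ → Ω → ℝ := fun j => (φ j) ∘ (X j) with hYdef
  have hYmeas : ∀ j, Measurable (Y j) := fun j => measurable_from_top.comp (hmeas j)
  -- measure computations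
  have hq0 : ∀ j, (0:ℝ) ≤ 1 - p j := fun j => by have := (hp j).2; linarith
  have hq1 : ∀ j, (1 - p j) ≤ 1 := fun j => by have := (hp j).1; linarith
  have hpow_le_one : ∀ j k, (1 - p j) ^ k ≤ 1 := fun j k => pow_le_one₀ (hq0 j) (hq1 j)
  have hμA : ∀ j, (μ (A j)).toReal = n * p j * (1 - p j)^(n-1) := by
    intro j
    have h := hbin j 1
    simp only [Nat.choose_one_right, pow_one] at h
    rw [show {ω | X j ω = 1} = A j from rfl] at h
    rw [h]
    exact ENNReal.toReal_ofReal (mul_nonneg (mul_nonneg (Nat.cast_nonneg n) (hp j).1.le)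
      (pow_nonneg (hq0 j) _))
  have hμB : ∀ j, (μ (B j)).toReal = (1 - p j)^n := by
    intro j
    have h := hbin j 0
    simp only [Nat.choose_zero_right, pow_zero, Nat.cast_one, one_mul, Nat.sub_zero] at h
    rw [show {ω | X j ω = 0} = B j from rfl] at h
    rw [h]
    exact ENNReal.toReal_ofReal (pow_nonneg (hq0 j) _)
  have hpow_split : ∀ j, (1 - p j)^n = (1 - p j)^(n-1) * (1 - p j) := by
    intro j
    conv_lhs => rw [← Nat.succ_pred_eq_of_pos hn]
    rw [pow_succ, Nat.pred_eq_sub_one]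
  -- pointwise indicator representations
  have hYeq : ∀ j, Y j = fun ω => (A j).indicator (fun _ => (1:ℝ)/n) ω
      + (B j).indicator (fun _ => -p j) ω := by
    intro j
    funext ω
    by_cases h1 : X j ω = 1
    · have h0 : ¬ (X j ω = 0) := by omega
      simp [hYdef, hφdef, Set.indicator, hAdef, hBdef, h1, h0]
    · by_cases h0 : X j ω = 0
      · simp [hYdef, hφdef, Set.indicator, hAdef, hBdef, h1, h0]
      · simp [hYdef, hφdef, Set.indicator, hAdef, hBdef, h1, h0]
  have hY2eq : ∀ j, (fun ω => (Y j ω)^2) = fun ω => (A j).indicator (fun _ => (1:ℝ)/n^2) ω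
      + (B j).indicator (fun _ => (p j)^2) ω := by
    intro j
    funext ω
    by_cases h1 : X j ω = 1
    · have h0 : ¬ (X j ω = 0) := by omega
      simp [hYdef, hφdef, Set.indicator, hAdef, hBdef, h1, h0]
      try rw [div_pow]
      try norm_num
    · by_cases h0 : X j ω = 0
      · simp [hYdef, hφdef, Set.indicator, hAdef, hBdef, h1, h0]
        try ring
      · simp [hYdef, hφdef, Set.indicator, hAdef, hBdef, h1, h0]
  -- expectation of Y j
  have hEY : ∀ j, ∫ ω, Y j ω ∂μ = p j ^ 2 * (1 - p j)^(n-1) := by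
    intro j
    rw [show (fun ω => Y j ω) = Y j from rfl, hYeq j]
    rw [integral_add ((integrable_const _).indicator (hAmeas j))
      ((integrable_const _).indicator (hBmeas j)),
      integral_indicator_const _ (hAmeas j), integral_indicator_const _ (hBmeas j),
      measureReal_def, measureReal_def, hμA j, hμB j]
    rw [hpow_split j]
    have hn0' : (n:ℝ) ≠ 0 := hn0.ne'
    simp only [smul_eq_mul]
    field_simp
    ring
  have hEY2 : ∀ j, ∫ ω, (Y j ω)^2 ∂μ = p j * (1 - p j)^(n-1) / n + p j^2 * (1 - p j)^n := by
    intro j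
    rw [hY2eq j]
    rw [integral_add ((integrable_const _).indicator (hAmeas j))
      ((integrable_const _).indicator (hBmeas j)),
      integral_indicator_const _ (hAmeas j), integral_indicator_const _ (hBmeas j),
      measureReal_def, measureReal_def, hμA j, hμB j]
    have hn0' : (n:ℝ) ≠ 0 := hn0.ne'
    simp only [smul_eq_mul]
    field_simp
  have hEY2le : ∀ j, ∫ ω, (Y j ω)^2 ∂μ ≤ C * p j := by
    intro j
    rw [hEY2 j]
    have h1 : p j * (1 - p j)^(n-1) / n ≤ p j / n := by
      have hb : p j * (1 - p j)^(n-1) ≤ p j := by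
        nlinarith [hpow_le_one j (n-1), (hp j).1.le, pow_nonneg (hq0 j) (n-1)]
      exact (div_le_div_iff_of_pos_right hn0).mpr hb
    have h2 : p j ^ 2 * (1 - p j)^n ≤ p j / (n+1) := by
      have hg := geom_bound (hp j).1.le (hp j).2.le n
      have hpos : (0:ℝ) < (n:ℝ) + 1 := by positivity
      have : p j * (1 - p j)^n ≤ 1 / (n+1) := by
        rw [le_div_iff₀ hpos]; linarith
      calc p j ^ 2 * (1 - p j)^n = p j * (p j * (1 - p j)^n) := by ring
        _ ≤ p j * (1 / (n+1)) := by
            apply mul_le_mul_of_nonneg_left this (hp j).1.le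
        _ = p j / (n+1) := by ring
    have hCeq : C * p j = p j / n + p j / (n+1) := by
      rw [hCdef]; field_simp; ring
    linarith
  -- MemLp of Y j
  have hbound : ∀ j ω, ‖Y j ω‖ ≤ 1/n + 1 := by
    intro j ω
    have hpj := hp j
    have h1n : (0:ℝ) ≤ 1/n := by positivity
    rw [Real.norm_eq_abs]
    have hY : Y j ω = (if X j ω = 1 then (1:ℝ) else 0)/n - (if X j ω = 0 then p j else 0) := rfl
    rw [hY]
    rcases em (X j ω = 1) with h1 | h1
    · have h0 : ¬ X j ω = 0 := by omega
      rw [if_pos h1, if_neg h0, sub_zero, abs_of_nonneg h1n]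
      linarith
    · rcases em (X j ω = 0) with h0 | h0
      · rw [if_neg h1, if_pos h0, zero_div, zero_sub, abs_neg, abs_of_nonneg hpj.1.le]
        linarith [hpj.2]
      · rw [if_neg h1, if_neg h0, zero_div, sub_zero, abs_zero]
        positivity
  have hYmem : ∀ j, MemLp (Y j) 2 μ := by
    intro j
    apply MemLp.mono_exponent (q := ⊤) ?_ le_top
    apply memLp_top_of_bound (hYmeas j).aestronglyMeasurable (1/n + 1)
    filter_upwards with ω using hbound j ω
  have hYint : ∀ j, Integrable (Y j) μ := fun j => (hYmem j).integrable one_le_two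
  have hVarY : ∀ j, variance (Y j) μ ≤ C * p j := by
    intro j
    refine (variance_le_expectation_sq (hYmeas j).aestronglyMeasurable).trans ?_
    exact (hEY2le j)
  -- partial sums
  set S : ℕ → Ω → ℝ := fun N => ∑ j ∈ Finset.range N, Y j with hSdef
  have hSapply : ∀ N ω, S N ω = ∑ j ∈ Finset.range N, Y j ω := by
    intro N ω
    simp [hSdef, Finset.sum_apply]
  have hSmeas : ∀ N, Measurable (S N) := by
    intro N
    have : S N = fun ω => ∑ j ∈ Finset.range N, Y j ω := by
      funext ω; exact hSapply N ω
    rw [this]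
    exact Finset.measurable_sum _ (fun j _ => hYmeas j)
  have hSmem : ∀ N, MemLp (S N) 2 μ := fun N => memLp_finsetSum' _ (fun j _ => hYmem j)
  have hpairwise : ∀ N, (↑(Finset.range N) : Set ℕ).Pairwise
      fun i j => IndepFun (Y i) (Y j) μ := by
    intro N i _ j _ hij
    exact (hindep.indepFun hij).comp measurable_from_top measurable_from_top
  have hVarS : ∀ N, variance (S N) μ ≤ C * W := by
    intro N
    rw [hSdef, IndepFun.variance_sum (fun j _ => hYmem j) (hpairwise N)]
    calc ∑ j ∈ Finset.range N, variance (Y j) μ ≤ ∑ j ∈ Finset.range N, C * p j :=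
          Finset.sum_le_sum (fun j _ => hVarY j)
      _ = C * ∑ j ∈ Finset.range N, p j := by rw [Finset.mul_sum]
      _ ≤ C * W := by
          apply mul_le_mul_of_nonneg_left ?_ hC0
          exact le_trans (Summable.sum_le_tsum _ (fun j _ => (hp j).1.le) hsum) hW
  set cc : ℕ → ℝ := fun N => ∑ j ∈ Finset.range N, p j ^ 2 * (1 - p j)^(n-1) with hccdef
  have hES : ∀ N, μ[S N] = cc N := by
    intro N
    rw [hSdef, hccdef]
    simp only [Finset.sum_apply]
    rw [integral_finset_sum _ (fun j _ => hYint j)]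
    exact Finset.sum_congr rfl (fun j _ => hEY j)
  have hmsum : Summable (fun j => p j ^ 2 * (1 - p j)^(n-1)) := by
    apply Summable.of_nonneg_of_le (fun j => mul_nonneg (sq_nonneg _) (pow_nonneg (hq0 j) _)) ?_ hsum
    intro j
    nlinarith [hpow_le_one j (n-1), (hp j).1, (hp j).2]
  set c : ℝ := ∑' j, p j ^ 2 * (1 - p j)^(n-1) with hcdef
  have hcc_tendsto : Tendsto cc atTop (𝓝 c) := hmsum.hasSum.tendsto_sum_nat
  -- Borel-Cantelli
  have hT : μ (limsup A atTop) = 0 := by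
    apply measure_limsup_atTop_eq_zero
    have hb : ∀ j, μ (A j) ≤ ENNReal.ofReal ((n:ℝ) * p j) := by
      intro j
      have := hbin j 1
      rw [show {ω | X j ω = 1} = A j from rfl] at this
      rw [this]
      apply ENNReal.ofReal_le_ofReal
      simp only [Nat.choose_one_right, pow_one]
      have hnp : (0:ℝ) ≤ (n:ℝ) * p j := mul_nonneg (Nat.cast_nonneg n) (hp j).1.le
      nlinarith [mul_le_mul_of_nonneg_left (hpow_le_one j (n-1)) hnp]
    have : ∑' j, μ (A j) ≤ ENNReal.ofReal (∑' j, (n:ℝ) * p j) := by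
      rw [ENNReal.ofReal_tsum_of_nonneg (fun j => mul_nonneg (Nat.cast_nonneg n) (hp j).1.le) (hsum.mul_left _)]
      exact ENNReal.tsum_le_tsum hb
    exact ne_top_of_le_ne_top ENNReal.ofReal_ne_top this
  have hae : ∀ᵐ ω ∂μ, ω ∉ limsup A atTop := by
    rw [ae_iff]
    simpa [not_not, Set.setOf_mem_eq] using hT
  -- a.e. convergence of partial sums to Z
  have haelim : ∀ᵐ ω ∂μ, Tendsto (fun N => S N ω) atTop (𝓝 (Z ω)) := by
    filter_upwards [hae] with ω hω
    have hev : ¬ ∃ᶠ j in atTop, ω ∈ A j := fun h => hω (mem_limsup_iff_frequently_mem.mpr h)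
    rw [Filter.not_frequently] at hev
    obtain ⟨J, hJ⟩ := eventually_atTop.mp hev
    have hs1 : Summable (fun j => if X j ω = 1 then (1:ℝ) else 0) := by
      apply summable_of_ne_finset_zero (s := Finset.range J)
      intro j hj
      have hJj : J ≤ j := by simp [Finset.mem_range] at hj; omega
      have : ω ∉ A j := hJ j hJj
      simp only [hAdef, Set.mem_setOf_eq] at this
      simp [this]
    have hs0 : Summable (fun j => if X j ω = 0 then p j else 0) := by
      apply Summable.of_nonneg_of_le ?_ ?_ hsum
      · intro j; split <;> simp [(hp j).1.le]
      · intro j; split <;> simp [(hp j).1.le]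
    have hsY : Summable (fun j => Y j ω) := by
      have := (hs1.div_const (n:ℝ)).sub hs0
      exact this
    have hZω : Z ω = ∑' j, Y j ω := by
      have h1 : Z ω = (∑' j, if X j ω = 1 then (1:ℝ) else 0) / n
          - ∑' j, (if X j ω = 0 then p j else 0) := rfl
      rw [h1, ← tsum_div_const, ← Summable.tsum_sub (hs1.div_const (n:ℝ)) hs0]
      exact tsum_congr fun j => rfl
    rw [hZω]
    have := hsY.hasSum.tendsto_sum_nat
    simpa [hSdef, Finset.sum_apply] using this
  have hZaesm : AEStronglyMeasurable Z μ :=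
    aestronglyMeasurable_of_tendsto_ae atTop (fun N => (hSmeas N).aestronglyMeasurable) haelim
  -- Fatou
  have hgmeas : ∀ N, Measurable (fun ω => ((‖S N ω - cc N‖₊ : ℝ≥0∞))^2) := by
    intro N
    exact ((hSmeas N).sub measurable_const).enorm.pow_const 2
  have hlint : ∫⁻ ω, ((‖Z ω - c‖₊ : ℝ≥0∞))^2 ∂μ ≤ ENNReal.ofReal (C * W) := by
    have haeliminf : ∀ᵐ ω ∂μ, ((‖Z ω - c‖₊ : ℝ≥0∞))^2
        = liminf (fun N => ((‖S N ω - cc N‖₊ : ℝ≥0∞))^2) atTop := by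
      filter_upwards [haelim] with ω hω
      have h1 : Tendsto (fun N => S N ω - cc N) atTop (𝓝 (Z ω - c)) := hω.sub hcc_tendsto
      have hcont : Continuous (fun x : ℝ => ((‖x‖₊ : ℝ≥0∞))^2) :=
        (ENNReal.continuous_pow 2).comp (ENNReal.continuous_coe.comp continuous_nnnorm)
      have h2 : Tendsto (fun N => ((‖S N ω - cc N‖₊ : ℝ≥0∞))^2) atTop
          (𝓝 (((‖Z ω - c‖₊ : ℝ≥0∞))^2)) := (hcont.tendsto _).comp h1
      exact (h2.liminf_eq).symm
    calc ∫⁻ ω, ((‖Z ω - c‖₊ : ℝ≥0∞))^2 ∂μ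
        = ∫⁻ ω, liminf (fun N => ((‖S N ω - cc N‖₊ : ℝ≥0∞))^2) atTop ∂μ :=
          lintegral_congr_ae haeliminf
      _ ≤ liminf (fun N => ∫⁻ ω, ((‖S N ω - cc N‖₊ : ℝ≥0∞))^2 ∂μ) atTop :=
          lintegral_liminf_le hgmeas
      _ ≤ ENNReal.ofReal (C * W) := by
          have hbnd : ∀ N, ∫⁻ ω, ((‖S N ω - cc N‖₊ : ℝ≥0∞))^2 ∂μ ≤ ENNReal.ofReal (C * W) := by
            intro N
            have heq : ∫⁻ ω, ((‖S N ω - cc N‖₊ : ℝ≥0∞))^2 ∂μ = evariance (S N) μ := by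
              rw [evariance, hES N]; rfl
            rw [heq, ← (hSmem N).ofReal_variance_eq]
            exact ENNReal.ofReal_le_ofReal (hVarS N)
            -- end
          refine le_trans (liminf_le_liminf (Eventually.of_forall hbnd)) ?_
          simp [liminf_const]
  -- integrability of (Z - c)^2
  have hZc_aesm : AEStronglyMeasurable (fun ω => Z ω - c) μ :=
    hZaesm.sub aestronglyMeasurable_const
  have hsq_aesm : AEStronglyMeasurable (fun ω => (Z ω - c)^2) μ := by
    have := hZc_aesm.mul hZc_aesm
    simpa [pow_two, Pi.mul_def] using this
  have hnn_eq : ∀ x : ℝ, ENNReal.ofReal (x^2) = ((‖x‖₊ : ℝ≥0∞))^2 := by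
    intro x
    rw [← enorm_eq_nnnorm, Real.enorm_eq_ofReal_abs, ← ENNReal.ofReal_pow (abs_nonneg x), sq_abs]
  have hfin : HasFiniteIntegral (fun ω => (Z ω - c)^2) μ := by
    show (∫⁻ ω, (‖(Z ω - c)^2‖₊ : ℝ≥0∞) ∂μ) < ⊤
    have : ∀ ω, ((‖(Z ω - c)^2‖₊ : ℝ≥0∞)) = ((‖Z ω - c‖₊ : ℝ≥0∞))^2 := by
      intro ω
      rw [← ENNReal.coe_pow, nnnorm_pow]
    rw [lintegral_congr this]
    exact lt_of_le_of_lt hlint ENNReal.ofReal_lt_top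
  have hsqint : Integrable (fun ω => (Z ω - c)^2) μ := ⟨hsq_aesm, hfin⟩
  have hZcmem : MemLp (fun ω => Z ω - c) 2 μ := (memLp_two_iff_integrable_sq hZc_aesm).2 hsqint
  have hZmem : MemLp Z 2 μ := by
    have h := hZcmem.add (memLp_const c)
    have heq : (fun ω => Z ω - c) + (fun _ => c) = Z := by funext ω; simp
    rwa [heq] at h
  have hZint : Integrable Z μ := hZmem.integrable one_le_two
  have hZ2int : Integrable (fun ω => Z ω ^ 2) μ := hZmem.integrable_sq
  -- expansion of E[(Z - c)^2]
  have hexp : ∫ ω, (Z ω - c)^2 ∂μ = (∫ ω, Z ω ^ 2 ∂μ) - 2*c*(∫ ω, Z ω ∂μ) + c^2 := by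
    have heq : (fun ω => (Z ω - c)^2) = fun ω => (Z ω ^ 2 - (2*c) * Z ω) + c^2 := by
      funext ω; ring
    have hintc : Integrable (fun ω => (2*c) * Z ω) μ := hZint.const_mul _
    have hint1 : Integrable (fun ω => Z ω ^ 2 - (2*c) * Z ω) μ := hZ2int.sub hintc
    have e1 : ∫ ω, (Z ω ^ 2 - (2*c) * Z ω + c^2) ∂μ
        = (∫ ω, (Z ω ^ 2 - (2*c) * Z ω) ∂μ) + (∫ _ω, (c^2 : ℝ) ∂μ) :=
      integral_add hint1 (integrable_const _)
    have e2 : ∫ ω, (Z ω ^ 2 - (2*c) * Z ω) ∂μ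
        = (∫ ω, Z ω ^ 2 ∂μ) - ∫ ω, (2*c) * Z ω ∂μ := integral_sub hZ2int hintc
    have e3 : ∫ ω, (2*c) * Z ω ∂μ = (2*c) * ∫ ω, Z ω ∂μ := integral_const_mul _ _
    rw [heq, e1, e2, e3, integral_const]
    simp [measure_univ]
    try ring
  -- bound ∫ (Z - c)^2
  have hintle : ∫ ω, (Z ω - c)^2 ∂μ ≤ C * W := by
    rw [integral_eq_lintegral_of_nonneg_ae (Eventually.of_forall fun ω => sq_nonneg _) hsq_aesm]
    have : ∫⁻ ω, ENNReal.ofReal ((Z ω - c)^2) ∂μ ≤ ENNReal.ofReal (C * W) := by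
      rw [lintegral_congr (fun ω => hnn_eq (Z ω - c))]
      exact hlint
    calc (∫⁻ ω, ENNReal.ofReal ((Z ω - c)^2) ∂μ).toReal
        ≤ (ENNReal.ofReal (C * W)).toReal :=
          ENNReal.toReal_mono ENNReal.ofReal_ne_top this
      _ = C * W := ENNReal.toReal_ofReal (by positivity)
  -- conclude
  have hvar : variance Z μ = μ[Z ^ 2] - (μ[Z]) ^ 2 := variance_eq_sub hZmem
  have hμZ2 : μ[Z ^ 2] = ∫ ω, Z ω ^ 2 ∂μ := rfl
  have : variance Z μ ≤ ∫ ω, (Z ω - c)^2 ∂μ := by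
    rw [hvar, hμZ2, hexp]
    nlinarith [sq_nonneg ((∫ ω, Z ω ∂μ) - c)]
  exact le_trans this hintle
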